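/- For every real p with 1/2 ≤ p < 1 and every integer n ≥ 3, one has v_n(p) ≥ v_{n-1}(p) + 1, and the inequality is strict unless p = 1/2 and n = 3. -/

import Mathlib

/-- `v p n` is the optimal expected number of heads in the coin game with `n` coins,
each landing heads with probability `p`. -/
noncomputable def v (p : ℝ) : ℕ → ℝ
  | 0 => 0
  | n + 1 =>
      ((n : ℝ) + 1) * p ^ (n + 1) + v p n * (1 - p) ^ (n + 1) +
        ∑ j ∈ (Finset.Icc 1 n).attach,
          (((n + 1).choose j.1 : ℕ) : ℝ) * p ^ (j.1 : ℕ) * (1 - p) ^ (n + 1 - j.1) *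
            ((Finset.Icc 1 j.1).attach.sup'
              (Finset.attach_nonempty_iff.mpr
                (Finset.nonempty_Icc.mpr (Finset.mem_Icc.mp j.2).1))
              (fun i => v p (n + 1 - i.1) + (i.1 : ℝ)))
decreasing_by
  · omega
  · have h := (Finset.mem_Icc.mp i.2).1
    omega

/-- `s p n = v p n - n + 1 - p`. -/
noncomputable def s (p : ℝ) (n : ℕ) : ℝ := v p n - n + 1 - p

/-! ### Auxiliary definitions -/

noncomputable def Cf (p : ℝ) (n : ℕ) : ℝ :=
  ((1-p)^(n+1) + ((n:ℝ)+1)*p^n*(1-p)^2) / (p^n*(p+((n:ℝ)+1)*(1-p)))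
noncomputable def Rf (p : ℝ) (n : ℕ) : ℝ := (1-p)^(n+1) / p^(n+1)
noncomputable def Xf (p : ℝ) (n : ℕ) : ℝ := min (Cf p n) (Rf p n)

/-! ### Basic unfolding lemmas for `v` -/

lemma v_zero (p : ℝ) : v p 0 = 0 := by rw [v]

lemma v_succ (p : ℝ) (n : ℕ) : v p (n+1) =
      ((n : ℝ) + 1) * p ^ (n + 1) + v p n * (1 - p) ^ (n + 1) +
        ∑ j ∈ (Finset.Icc 1 n).attach,
          (((n + 1).choose j.1 : ℕ) : ℝ) * p ^ (j.1 : ℕ) * (1 - p) ^ (n + 1 - j.1) *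
            ((Finset.Icc 1 j.1).attach.sup'
              (Finset.attach_nonempty_iff.mpr
                (Finset.nonempty_Icc.mpr (Finset.mem_Icc.mp j.2).1))
              (fun i => v p (n + 1 - i.1) + (i.1 : ℝ))) := by
  rw [v]

lemma v_one (p : ℝ) : v p 1 = p := by
  rw [v_succ]
  rw [Finset.sum_eq_zero (fun x hx => by
    have := x.2; rw [Finset.mem_Icc] at this; omega)]
  simp [v_zero]

lemma sum_binom (p : ℝ) (n : ℕ) (hn : 1 ≤ n) :
    ∑ j ∈ Finset.Ico 1 n, (((n+1).choose j : ℕ) : ℝ) * p ^ j * (1-p) ^ (n+1-j)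
      = 1 - p^(n+1) - (1-p)^(n+1) - ((n:ℝ)+1) * p^n * (1-p) := by
  have h := add_pow p (1-p) (n+1)
  rw [show p + (1-p) = 1 by ring, one_pow] at h
  rw [Finset.sum_range_succ, Finset.sum_range_succ] at h
  rw [Finset.range_eq_Ico, Finset.sum_eq_sum_Ico_succ_bot (by omega)] at h
  simp only [Nat.choose_self, Nat.choose_zero_right, Nat.choose_succ_self_right,
    pow_zero, Nat.cast_one, Nat.cast_add, Nat.cast_ofNat] at h
  have h2 : ∀ j ∈ Finset.Ico 1 n, (((n+1).choose j : ℕ) : ℝ) * p ^ j * (1-p) ^ (n+1-j)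
      = p ^ j * (1-p) ^ (n+1-j) * ((n+1).choose j : ℕ) := fun j hj => by ring
  rw [Finset.sum_congr rfl h2]
  have e1 : n + 1 - n = 1 := by omega
  have e2 : n + 1 - 0 = n + 1 := by omega
  rw [e1, e2, Nat.sub_self, pow_zero, pow_one] at h
  push_cast at h ⊢
  linarith [h]

lemma chain (p : ℝ) (n : ℕ)
    (Hmono : ∀ m : ℕ, 3 ≤ m → m ≤ n → v p (m-1) + 1 ≤ v p m) :
    ∀ i : ℕ, 1 ≤ i → i + 1 ≤ n → v p (n+1-i) + (i:ℝ) ≤ v p n + 1 := by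
  intro i hi
  induction i, hi using Nat.le_induction with
  | base => intro _; norm_num
  | succ i hi IH =>
    intro h
    have h1 : v p (n - i) + 1 ≤ v p (n + 1 - i) := by
      have := Hmono (n + 1 - i) (by omega) (by omega)
      have e : n + 1 - i - 1 = n - i := by omega
      rwa [e] at this
    have h2 := IH (by omega)
    have e2 : n + 1 - (i+1) = n - i := by omega
    rw [e2]
    push_cast
    linarith

lemma sup_eval (p : ℝ) (n : ℕ) (hn : 1 ≤ n)
    (Hmono : ∀ m : ℕ, 3 ≤ m → m ≤ n → v p (m-1) + 1 ≤ v p m)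
    (j : ℕ) (hj : j ∈ Finset.Icc 1 n) :
    (Finset.Icc 1 j).attach.sup'
      (Finset.attach_nonempty_iff.mpr
        (Finset.nonempty_Icc.mpr (Finset.mem_Icc.mp hj).1))
      (fun i => v p (n + 1 - i.1) + (i.1 : ℝ))
    = if j = n then max (v p n + 1) (p + n) else v p n + 1 := by
  rw [Finset.mem_Icc] at hj
  by_cases hjn : j = n
  · subst hjn
    rw [if_pos rfl]
    apply le_antisymm
    · apply Finset.sup'_le
      intro i _
      have hi := i.2
      rw [Finset.mem_Icc] at hi
      by_cases hij : i.1 = j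
      · have e : j + 1 - i.1 = 1 := by omega
        rw [e, v_one, hij]
        exact le_max_right _ _
      · have := chain p j Hmono i.1 hi.1 (by omega)
        exact le_trans this (le_max_left _ _)
    · rw [max_le_iff]
      constructor
      · have m1 : (1:ℕ) ∈ Finset.Icc 1 j := by rw [Finset.mem_Icc]; omega
        have := Finset.le_sup' (f := fun i : {x // x ∈ Finset.Icc 1 j} => v p (j + 1 - i.1) + (i.1 : ℝ))
          (Finset.mem_attach _ (⟨1, m1⟩ : {x // x ∈ Finset.Icc 1 j}))
        simpa [-Finset.le_sup'_iff] using this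
      · have mj : j ∈ Finset.Icc 1 j := by rw [Finset.mem_Icc]; omega
        have := Finset.le_sup' (f := fun i : {x // x ∈ Finset.Icc 1 j} => v p (j + 1 - i.1) + (i.1 : ℝ))
          (Finset.mem_attach _ (⟨j, mj⟩ : {x // x ∈ Finset.Icc 1 j}))
        have e : j + 1 - j = 1 := by omega
        rw [e, v_one] at this
        exact this
  · rw [if_neg hjn]
    apply le_antisymm
    · apply Finset.sup'_le
      intro i _
      have hi := i.2
      rw [Finset.mem_Icc] at hi
      exact chain p n Hmono i.1 hi.1 (by omega)
    · have m1 : (1:ℕ) ∈ Finset.Icc 1 j := by rw [Finset.mem_Icc]; omega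
      have := Finset.le_sup' (f := fun i : {x // x ∈ Finset.Icc 1 j} => v p (n + 1 - i.1) + (i.1 : ℝ))
        (Finset.mem_attach _ (⟨1, m1⟩ : {x // x ∈ Finset.Icc 1 j}))
      simpa [-Finset.le_sup'_iff] using this

lemma v_step (p : ℝ) (n : ℕ) (hn : 1 ≤ n)
    (Hmono : ∀ m : ℕ, 3 ≤ m → m ≤ n → v p (m-1) + 1 ≤ v p m) :
    v p (n+1) = ((n:ℝ)+1)*p^(n+1) + v p n * (1-p)^(n+1)
      + (1 - p^(n+1) - (1-p)^(n+1) - ((n:ℝ)+1)*p^n*(1-p)) * (v p n + 1)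
      + ((n:ℝ)+1)*p^n*(1-p) * max (v p n + 1) (p + n) := by
  rw [v_succ]
  have hcong : ∀ j : {x // x ∈ Finset.Icc 1 n},
      (((n + 1).choose j.1 : ℕ) : ℝ) * p ^ (j.1 : ℕ) * (1 - p) ^ (n + 1 - j.1) *
            ((Finset.Icc 1 j.1).attach.sup'
              (Finset.attach_nonempty_iff.mpr
                (Finset.nonempty_Icc.mpr (Finset.mem_Icc.mp j.2).1))
              (fun i => v p (n + 1 - i.1) + (i.1 : ℝ)))
      = (fun k => (((n + 1).choose k : ℕ) : ℝ) * p ^ k * (1 - p) ^ (n + 1 - k) *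
          (if k = n then max (v p n + 1) (p + n) else v p n + 1)) j.1 := by
    intro j
    rw [sup_eval p n hn Hmono j.1 j.2]
  rw [Finset.sum_congr rfl (fun j _ => hcong j)]
  rw [Finset.sum_attach (Finset.Icc 1 n)
    (fun k => (((n + 1).choose k : ℕ) : ℝ) * p ^ k * (1 - p) ^ (n + 1 - k) *
          (if k = n then max (v p n + 1) (p + n) else v p n + 1))]
  rw [← Finset.Ico_add_one_right_eq_Icc, Finset.sum_Ico_succ_top (by omega : 1 ≤ n)]
  rw [if_pos rfl]
  have hrest : ∑ j ∈ Finset.Ico 1 n, (((n + 1).choose j : ℕ) : ℝ) * p ^ j * (1 - p) ^ (n + 1 - j) *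
          (if j = n then max (v p n + 1) (p + n) else v p n + 1)
      = (1 - p^(n+1) - (1-p)^(n+1) - ((n:ℝ)+1)*p^n*(1-p)) * (v p n + 1) := by
    rw [Finset.sum_congr rfl (fun j hj => by
      rw [if_neg (by rw [Finset.mem_Ico] at hj; omega)])]
    rw [← Finset.sum_mul, sum_binom p n hn]
  rw [hrest]
  have e1 : n + 1 - n = 1 := by omega
  rw [Nat.choose_succ_self_right, e1, pow_one]
  push_cast
  ring

/-! ### Algebraic lemmas about `Cf`, `Rf`, `Xf` -/

lemma den_pos {p : ℝ} (hp1 : 1/2 ≤ p) (hp2 : p < 1) (n : ℕ) :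
    0 < p^n*(p+((n:ℝ)+1)*(1-p)) := by
  have h1 : 0 < p := by linarith
  have h2 : 0 < 1 - p := by linarith
  have h3 : (0:ℝ) < (n:ℝ)+1 := by positivity
  positivity

lemma Cf_mul {p : ℝ} (hp1 : 1/2 ≤ p) (hp2 : p < 1) (n : ℕ) :
    Cf p n * (p^n*(p+((n:ℝ)+1)*(1-p))) = (1-p)^(n+1) + ((n:ℝ)+1)*p^n*(1-p)^2 := by
  rw [Cf, div_mul_cancel₀]
  exact ne_of_gt (den_pos hp1 hp2 n)

lemma Rf_mul {p : ℝ} (hp1 : 1/2 ≤ p) (n : ℕ) : Rf p n * p^(n+1) = (1-p)^(n+1) := by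
  rw [Rf, div_mul_cancel₀]
  exact pow_ne_zero _ (by positivity : (0:ℝ) < p).ne'

lemma eps_le_one {p : ℝ} (hp1 : 1/2 ≤ p) (hp2 : p < 1) (n : ℕ) (hn : 1 ≤ n) :
    p^n*(p+((n:ℝ)+1)*(1-p)) ≤ 1 := by
  induction n with
  | zero => omega
  | succ m IH =>
    rcases Nat.eq_or_lt_of_le hn with h | h
    · have : m = 0 := by omega
      subst this
      push_cast
      nlinarith
    · have hm : 1 ≤ m := by omega
      have hIH := IH hm
      have key : p^(m+1)*(p+(((m+1):ℕ)+1:ℝ)*(1-p))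
          = p^m*(p+((m:ℝ)+1)*(1-p)) - ((m:ℝ)+1)*p^m*(1-p)^2 := by
        push_cast; ring
      rw [key]
      have h1 : (0:ℝ) < p := by linarith
      have : 0 ≤ ((m:ℝ)+1)*p^m*(1-p)^2 := by positivity
      linarith

lemma Cf_le_max {p : ℝ} (hp1 : 1/2 ≤ p) (hp2 : p < 1) (n : ℕ) :
    Cf p n ≤ max (Rf p n) (1-p) := by
  have hd := den_pos hp1 hp2 n
  rw [Cf, div_le_iff₀ hd]
  have hp' : (0:ℝ) < p := by linarith
  have hq' : (0:ℝ) < 1 - p := by linarith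
  set M := max (Rf p n) (1-p) with hM
  have h1 : (1-p)^(n+1) = Rf p n * p^(n+1) := (Rf_mul hp1 n).symm
  have t1 : Rf p n * p^(n+1) ≤ M * p^(n+1) :=
    mul_le_mul_of_nonneg_right (le_max_left _ _) (by positivity)
  have hnn : (0:ℝ) ≤ ((n:ℝ)+1)*p^n*(1-p) := by
    apply mul_nonneg
    · positivity
    · linarith
  have t2 : (1-p) * (((n:ℝ)+1)*p^n*(1-p)) ≤ M * (((n:ℝ)+1)*p^n*(1-p)) :=
    mul_le_mul_of_nonneg_right (le_max_right _ _) hnn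
  have e1 : ((n:ℝ)+1)*p^n*(1-p)^2 = (1-p) * (((n:ℝ)+1)*p^n*(1-p)) := by ring
  have e2 : M*(p^n*(p+((n:ℝ)+1)*(1-p))) = M*p^(n+1) + M*(((n:ℝ)+1)*p^n*(1-p)) := by
    ring
  linarith

lemma min_le_Cf {p : ℝ} (hp1 : 1/2 ≤ p) (hp2 : p < 1) (n : ℕ) :
    min (Rf p n) (1-p) ≤ Cf p n := by
  have hd := den_pos hp1 hp2 n
  rw [Cf, le_div_iff₀ hd]
  have hp' : (0:ℝ) < p := by linarith
  have hq' : (0:ℝ) < 1 - p := by linarith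
  set M := min (Rf p n) (1-p) with hM
  have h1 : (1-p)^(n+1) = Rf p n * p^(n+1) := (Rf_mul hp1 n).symm
  have t1 : M * p^(n+1) ≤ Rf p n * p^(n+1) :=
    mul_le_mul_of_nonneg_right (min_le_left _ _) (by positivity)
  have hnn : (0:ℝ) ≤ ((n:ℝ)+1)*p^n*(1-p) := by
    apply mul_nonneg
    · positivity
    · linarith
  have t2 : M * (((n:ℝ)+1)*p^n*(1-p)) ≤ (1-p) * (((n:ℝ)+1)*p^n*(1-p)) :=
    mul_le_mul_of_nonneg_right (min_le_right _ _) hnn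
  have e1 : ((n:ℝ)+1)*p^n*(1-p)^2 = (1-p) * (((n:ℝ)+1)*p^n*(1-p)) := by ring
  have e2 : M*(p^n*(p+((n:ℝ)+1)*(1-p))) = M*p^(n+1) + M*(((n:ℝ)+1)*p^n*(1-p)) := by
    ring
  linarith

lemma Rf_anti {p : ℝ} (hp1 : 1/2 < p) (hp2 : p < 1) (n : ℕ) :
    Rf p (n+1) < Rf p n := by
  have hp' : (0:ℝ) < p := by linarith
  have hq' : (0:ℝ) < 1 - p := by linarith
  rw [Rf, Rf, div_lt_div_iff₀ (by positivity) (by positivity)]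
  have e1 : (1-p)^(n+1+1) = (1-p)^(n+1)*(1-p) := by ring
  have e2 : p^(n+1+1) = p^(n+1)*p := by ring
  rw [e1, e2]
  have h1 : (0:ℝ) < (1-p)^(n+1) := by positivity
  have h2 : (0:ℝ) < p^(n+1) := by positivity
  nlinarith [mul_pos h1 h2]

lemma Cf_anti {p : ℝ} (hp1 : 1/2 ≤ p) (hp2 : p < 1) (n : ℕ)
    (hreg : p^(n+2) ≤ (1-p)^(n+1)) : Cf p (n+1) < Cf p n := by
  have hp' : (0:ℝ) < p := by linarith
  have hq' : (0:ℝ) < 1 - p := by linarith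
  have hP : (0:ℝ) < p^n := by positivity
  have hT : (0:ℝ) < (1-p)^n := by positivity
  have key : 0 < (1-p)^n - p^n*(1-p) := by
    rcases eq_or_lt_of_le hp1 with he | hlt
    · have hq : (1:ℝ) - p = p := by linarith
      rw [hq]
      nlinarith
    · have h1 : p^(n+2) = p^n*p^2 := by ring
      have h2 : (1-p)^(n+1) = (1-p)^n*(1-p) := by ring
      rw [h1, h2] at hreg
      nlinarith [mul_le_mul_of_nonneg_right hreg (le_of_lt hq'), sq_nonneg p]
  rw [Cf, Cf, div_lt_div_iff₀ (den_pos hp1 hp2 (n+1)) (den_pos hp1 hp2 n)]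
  push_cast
  have e1 : (1-p)^(n+1) = (1-p)^n*(1-p) := by ring
  have e2 : (1-p)^(n+1+1) = (1-p)^n*(1-p)^2 := by ring
  have e3 : p^(n+1) = p^n*p := by ring
  rw [e1, e2, e3]
  have nn1 : 0 ≤ (1-p)^n*(((n:ℝ)+1)*(1-p)*(p-(1-p))) := by
    apply mul_nonneg (le_of_lt hT)
    apply mul_nonneg
    · apply mul_nonneg (by positivity)
      linarith
    · linarith
  nlinarith [mul_pos (mul_pos hP hq')
    (by nlinarith [nn1, mul_pos (show (0:ℝ) < p^2 by positivity) key] :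
      (0:ℝ) < (1-p)^n*(p^2+((n:ℝ)+1)*(1-p)*(p-(1-p))) - p^n*p^2*(1-p))]

lemma Cf_half (p : ℝ) (hp : p = 1/2) (n : ℕ) :
    Cf p n = ((n:ℝ)+3)/(2*((n:ℝ)+2)) := by
  subst hp
  rw [Cf]
  have h1 : ((1:ℝ)/2)^n ≠ 0 := by positivity
  have h2 : (1:ℝ) - 1/2 = 1/2 := by norm_num
  rw [h2]
  have hn2 : (0:ℝ) < (n:ℝ)+2 := by positivity
  field_simp
  ring

lemma Rf_half (p : ℝ) (hp : p = 1/2) (n : ℕ) : Rf p n = 1 := by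
  subst hp
  rw [Rf]
  norm_num

lemma Xf_anti {p : ℝ} (hp1 : 1/2 ≤ p) (hp2 : p < 1) (n : ℕ) :
    Xf p (n+1) < Xf p n := by
  rcases eq_or_lt_of_le hp1 with he | hlt
  · have hp : p = 1/2 := he.symm
    rw [Xf, Xf, Cf_half p hp, Cf_half p hp, Rf_half p hp, Rf_half p hp]
    push_cast
    have h1 : ((n:ℝ)+1+3)/(2*((n:ℝ)+1+2)) < ((n:ℝ)+3)/(2*((n:ℝ)+2)) := by
      rw [div_lt_div_iff₀ (by positivity) (by positivity)]
      ring_nf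
      nlinarith [sq_nonneg ((n:ℝ))]
    have h2 : ((n:ℝ)+3)/(2*((n:ℝ)+2)) ≤ 1 := by
      rw [div_le_one (by positivity)]
      linarith
    have h3 : ((n:ℝ)+1+3)/(2*((n:ℝ)+1+2)) ≤ 1 := by
      rw [div_le_one (by positivity)]
      linarith
    rw [min_eq_left h2, min_eq_left h3]
    exact h1
  · by_cases hreg : p^(n+2) ≤ (1-p)^(n+1)
    · rw [Xf, Xf, lt_min_iff]
      constructor
      · exact lt_of_le_of_lt (min_le_left _ _) (Cf_anti hp1 hp2 n hreg)
      · exact lt_of_le_of_lt (min_le_right _ _) (Rf_anti hlt hp2 n)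
    · push_neg at hreg
      have hq' : (0:ℝ) < 1 - p := by linarith
      have hp' : (0:ℝ) < p := by linarith
      have hRq : Rf p (n+1) < 1 - p := by
        rw [Rf, div_lt_iff₀ (by positivity)]
        have e : (1-p)^(n+1+1) = (1-p)^(n+1)*(1-p) := by ring
        rw [e]
        nlinarith [hreg]
      have hRR : Rf p (n+1) < Rf p n := Rf_anti hlt hp2 n
      rw [Xf, Xf, lt_min_iff]
      constructor
      · calc min (Cf p (n+1)) (Rf p (n+1)) ≤ Rf p (n+1) := min_le_right _ _
          _ < min (Rf p n) (1-p) := lt_min hRR hRq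
          _ ≤ Cf p n := min_le_Cf hp1 hp2 n
      · exact lt_of_le_of_lt (min_le_right _ _) hRR

/-! ### The key step estimates -/

lemma exp_nonneg {p : ℝ} (hp1 : 1/2 ≤ p) (hp2 : p < 1) (n : ℕ) (U : ℝ)
    (hU : Xf p n ≤ U) :
    0 ≤ p^(n+1)*U - (1-p)^(n+1) + ((n:ℝ)+1)*p^n*(1-p)*(max 0 (U - (1-p))) ∧
    (Xf p n < U →
      0 < p^(n+1)*U - (1-p)^(n+1) + ((n:ℝ)+1)*p^n*(1-p)*(max 0 (U - (1-p)))) := by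
  have hp' : (0:ℝ) < p := by linarith
  have hq' : (0:ℝ) < 1 - p := by linarith
  have hD := den_pos hp1 hp2 n
  have hC := Cf_mul hp1 hp2 n
  have hR := Rf_mul hp1 (n := n)
  have hpn1 : (0:ℝ) < p^(n+1) := by positivity
  rcases le_or_gt (1-p) U with hq | hq
  · rw [max_eq_right (by linarith : (0:ℝ) ≤ U - (1-p))]
    have iden : p^(n+1)*U - (1-p)^(n+1) + ((n:ℝ)+1)*p^n*(1-p)*(U - (1-p))
        = U * (p^n*(p+((n:ℝ)+1)*(1-p))) - ((1-p)^(n+1) + ((n:ℝ)+1)*p^n*(1-p)^2) := by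
      ring
    rw [iden]
    constructor
    · have hUC : Cf p n ≤ U := by
        rcases le_total (Cf p n) (Rf p n) with h | h
        · have : Xf p n = Cf p n := min_eq_left h
          linarith
        · rcases le_total (Rf p n) (1-p) with h2 | h2
          · have := Cf_le_max hp1 hp2 n
            rw [max_eq_right h2] at this
            linarith
          · have := Cf_le_max hp1 hp2 n
            rw [max_eq_left h2] at this
            have hXf : Xf p n = Rf p n := min_eq_right h
            linarith
      nlinarith [mul_le_mul_of_nonneg_right hUC (le_of_lt hD)]
    · intro hUlt
      rcases le_total (Cf p n) (Rf p n) with h | h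
      · have hXf : Xf p n = Cf p n := min_eq_left h
        have : Cf p n < U := by linarith
        nlinarith [mul_lt_mul_of_pos_right this hD]
      · have hXf : Xf p n = Rf p n := min_eq_right h
        have hRU : Rf p n < U := by linarith
        have iden2 : U * (p^n*(p+((n:ℝ)+1)*(1-p))) - ((1-p)^(n+1) + ((n:ℝ)+1)*p^n*(1-p)^2)
            = p^(n+1)*(U - Rf p n) + ((n:ℝ)+1)*p^n*(1-p)*(U - (1-p))
              + (Rf p n * p^(n+1) - (1-p)^(n+1)) := by
          ring
        rw [iden2, hR]
        have t1 : 0 < p^(n+1)*(U - Rf p n) := by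
          apply mul_pos hpn1
          linarith
        have t2 : 0 ≤ ((n:ℝ)+1)*p^n*(1-p)*(U - (1-p)) := by
          apply mul_nonneg
          · apply mul_nonneg
            · apply mul_nonneg (by positivity) (by positivity)
            · linarith
          · linarith
        linarith
  · rw [max_eq_left (by linarith : U - (1-p) ≤ 0)]
    have hRU : Rf p n ≤ U := by
      rcases le_total (Rf p n) (Cf p n) with h | h
      · have : Xf p n = Rf p n := min_eq_right h
        linarith
      · have hmin := min_le_Cf hp1 hp2 n
        have hXf : Xf p n = Cf p n := min_eq_left h
        rcases le_total (Rf p n) (1-p) with h2 | h2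
        · rw [min_eq_left h2] at hmin
          linarith
        · rw [min_eq_right h2] at hmin
          linarith
    constructor
    · nlinarith [mul_le_mul_of_nonneg_right hRU (le_of_lt hpn1)]
    · intro hUlt
      have hRU' : Rf p n < U := by
        rcases le_total (Rf p n) (Cf p n) with h | h
        · have : Xf p n = Rf p n := min_eq_right h
          linarith
        · have hmin := min_le_Cf hp1 hp2 n
          have hXf : Xf p n = Cf p n := min_eq_left h
          rcases le_total (Rf p n) (1-p) with h2 | h2
          · rw [min_eq_left h2] at hmin
            linarith
          · rw [min_eq_right h2] at hmin
            linarith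
      nlinarith [mul_lt_mul_of_pos_right hRU' hpn1]

lemma exp_keep {p : ℝ} (hp1 : 1/2 ≤ p) (hp2 : p < 1) (n : ℕ) (hn : 1 ≤ n) (U : ℝ)
    (hU : Xf p n ≤ U) :
    Xf p n ≤ U - (p^(n+1)*U - (1-p)^(n+1) + ((n:ℝ)+1)*p^n*(1-p)*(max 0 (U - (1-p)))) := by
  have hp' : (0:ℝ) < p := by linarith
  have hq' : (0:ℝ) < 1 - p := by linarith
  have hD := den_pos hp1 hp2 n
  have hC := Cf_mul hp1 hp2 n
  have hR := Rf_mul hp1 (n := n)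
  have heps := eps_le_one hp1 hp2 n hn
  have hXC : Xf p n ≤ Cf p n := min_le_left _ _
  have hXR : Xf p n ≤ Rf p n := min_le_right _ _
  rcases le_or_gt (1-p) U with hq | hq
  · rw [max_eq_right (by linarith : (0:ℝ) ≤ U - (1-p))]
    have co_nonneg : 0 ≤ 1 - p^n*(p+((n:ℝ)+1)*(1-p)) := by linarith
    have t1 : 0 ≤ (U - Xf p n) * (1 - p^n*(p+((n:ℝ)+1)*(1-p))) :=
      mul_nonneg (by linarith) co_nonneg
    have t2 : 0 ≤ (Cf p n - Xf p n) * (p^n*(p+((n:ℝ)+1)*(1-p))) :=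
      mul_nonneg (by linarith) (le_of_lt hD)
    have iden : U - (p^(n+1)*U - (1-p)^(n+1) + ((n:ℝ)+1)*p^n*(1-p)*(U - (1-p))) - Xf p n
        = (U - Xf p n) * (1 - p^n*(p+((n:ℝ)+1)*(1-p)))
          + (Cf p n - Xf p n) * (p^n*(p+((n:ℝ)+1)*(1-p)))
          - (Cf p n * (p^n*(p+((n:ℝ)+1)*(1-p))) - ((1-p)^(n+1) + ((n:ℝ)+1)*p^n*(1-p)^2)) := by
      ring
    linarith [iden, hC, t1, t2]
  · rw [max_eq_left (by linarith : U - (1-p) ≤ 0)]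
    have hp1n : p^(n+1) ≤ 1 := pow_le_one₀ (by linarith) (by linarith)
    have t1 : 0 ≤ (U - Xf p n) * (1 - p^(n+1)) :=
      mul_nonneg (by linarith) (by linarith)
    have t2 : 0 ≤ (Rf p n - Xf p n) * p^(n+1) :=
      mul_nonneg (by linarith) (by positivity)
    have iden : U - (p^(n+1)*U - (1-p)^(n+1) + ((n:ℝ)+1)*p^n*(1-p)*0) - Xf p n
        = (U - Xf p n) * (1 - p^(n+1)) + (Rf p n - Xf p n) * p^(n+1)
          - (Rf p n * p^(n+1) - (1-p)^(n+1)) := by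
      ring
    linarith [iden, hR, t1, t2]

/-! ### The main induction step -/

lemma main_step {p : ℝ} (hp1 : 1/2 ≤ p) (hp2 : p < 1) (n : ℕ) (hn : 1 ≤ n)
    (Hmono : ∀ m : ℕ, 3 ≤ m → m ≤ n → v p (m-1) + 1 ≤ v p m)
    (hU : Xf p n ≤ (n:ℝ) - v p n) :
    (v p n + 1 ≤ v p (n+1)) ∧
    (Xf p n < (n:ℝ) - v p n → v p n + 1 < v p (n+1)) ∧
    (Xf p (n+1) < ((n:ℝ)+1) - v p (n+1)) := by
  have hstep := v_step p n hn Hmono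
  set U : ℝ := (n:ℝ) - v p n with hUdef
  have hmax : max (v p n + 1) (p + (n:ℝ)) = (v p n + 1) + max 0 (U - (1-p)) := by
    rcases le_total (v p n + 1) (p + (n:ℝ)) with h | h
    · rw [max_eq_right h, max_eq_right (by simp [hUdef]; linarith : (0:ℝ) ≤ U - (1-p))]
      simp [hUdef]
      ring
    · rw [max_eq_left h, max_eq_left (by simp [hUdef]; linarith : U - (1-p) ≤ 0)]
      ring
  rw [hmax] at hstep
  have hE : v p (n+1) = (v p n + 1) +
      (p^(n+1)*U - (1-p)^(n+1) + ((n:ℝ)+1)*p^n*(1-p)*(max 0 (U - (1-p)))) := by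
    rw [hstep, hUdef]
    ring
  obtain ⟨hge, hgt⟩ := exp_nonneg hp1 hp2 n U hU
  have hkeep := exp_keep hp1 hp2 n hn U hU
  refine ⟨by linarith [hE, hge], fun h => by linarith [hE, hgt h], ?_⟩
  have h1 : Xf p n ≤ ((n:ℝ)+1) - v p (n+1) := by
    have : ((n:ℝ)+1) - v p (n+1)
        = U - (p^(n+1)*U - (1-p)^(n+1) + ((n:ℝ)+1)*p^n*(1-p)*(max 0 (U - (1-p)))) := by
      rw [hE, hUdef]
      ring
    rw [this]
    exact hkeep
  exact lt_of_lt_of_le (Xf_anti hp1 hp2 n) h1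

/-! ### Base case: `n = 2` -/

lemma v_two (p : ℝ) : v p 2 = 2*p^2 + p*(1-p)^2 + 2*p*(1-p)*(p+1) := by
  have h := v_step p 1 (le_refl 1) (fun m hm hm' => absurd (le_trans hm hm') (by omega))
  rw [h, v_one]
  have : max (p + 1) (p + (1:ℕ)) = p + 1 := by
    norm_num
  push_cast at this ⊢
  rw [this]
  ring

lemma base_two {p : ℝ} (hp1 : 1/2 ≤ p) (hp2 : p < 1) :
    Xf p 2 ≤ (2:ℝ) - v p 2 ∧ (p ≠ 1/2 → Xf p 2 < (2:ℝ) - v p 2) := by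
  have hp' : (0:ℝ) < p := by linarith
  have hq' : (0:ℝ) < 1 - p := by linarith
  have hD := den_pos hp1 hp2 2
  have hId : ((2:ℝ) - v p 2) * (p^(2:ℕ)*(p+(((2:ℕ):ℝ)+1)*(1-p)))
      - ((1-p)^(2+1) + (((2:ℕ):ℝ)+1)*p^(2:ℕ)*(1-p)^2)
      = (2*p-1)*(1-p)^3*(1+p)^2 := by
    rw [v_two]
    push_cast
    ring
  have hCle : Cf p 2 ≤ (2:ℝ) - v p 2 := by
    rw [Cf, div_le_iff₀ hD]
    nlinarith [hId, mul_nonneg (mul_nonneg (show (0:ℝ) ≤ 2*p-1 by linarith)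
      (show (0:ℝ) ≤ (1-p)^3 by positivity)) (show (0:ℝ) ≤ (1+p)^2 by positivity)]
  constructor
  · exact le_trans (min_le_left _ _) hCle
  · intro hne
    have hlt : 1/2 < p := lt_of_le_of_ne hp1 (fun h => hne h.symm)
    have hClt : Cf p 2 < (2:ℝ) - v p 2 := by
      rw [Cf, div_lt_iff₀ hD]
      nlinarith [hId, mul_pos (mul_pos (show (0:ℝ) < 2*p-1 by linarith)
        (show (0:ℝ) < (1-p)^3 by positivity)) (show (0:ℝ) < (1+p)^2 by positivity)]
    exact lt_of_le_of_lt (min_le_left _ _) hClt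

lemma master {p : ℝ} (hp1 : 1/2 ≤ p) (hp2 : p < 1) :
    ∀ N : ℕ, 2 ≤ N →
    (∀ m : ℕ, 3 ≤ m → m ≤ N → v p (m-1) + 1 ≤ v p m) ∧
    (∀ m : ℕ, 3 ≤ m → m ≤ N → (p ≠ 1/2 ∨ 4 ≤ m) → v p (m-1) + 1 < v p m) ∧
    (Xf p N ≤ (N:ℝ) - v p N) ∧
    ((p ≠ 1/2 ∨ 3 ≤ N) → Xf p N < (N:ℝ) - v p N) := by
  intro N hN
  induction N, hN using Nat.le_induction with
  | base =>
    refine ⟨fun m hm hm' => by omega, fun m hm hm' _ => by omega,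
      (base_two hp1 hp2).1, ?_⟩
    rintro (hne | h3)
    · exact (base_two hp1 hp2).2 hne
    · omega
  | succ N hN IH =>
    obtain ⟨Ha, Hb, Hc, Hd⟩ := IH
    obtain ⟨S1, S2, S3⟩ := main_step hp1 hp2 N (by omega) Ha Hc
    refine ⟨?_, ?_, ?_, ?_⟩
    · intro m hm hm'
      rcases Nat.lt_or_ge m (N+1) with h | h
      · exact Ha m hm (by omega)
      · have : m = N+1 := by omega
        subst this
        simpa using S1
    · intro m hm hm' hcond
      rcases Nat.lt_or_ge m (N+1) with h | h
      · exact Hb m hm (by omega) hcond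
      · have hmeq : m = N+1 := by omega
        subst hmeq
        have hXlt : Xf p N < (N:ℝ) - v p N := by
          apply Hd
          rcases hcond with h | h
          · exact Or.inl h
          · right; omega
        simpa using S2 hXlt
    · push_cast
      exact le_of_lt S3
    · intro _
      push_cast
      exact S3

theorem coin_game_v_increase (p : ℝ) (hp1 : 1 / 2 ≤ p) (hp2 : p < 1)
    (n : ℕ) (hn : 3 ≤ n) :
    v p (n - 1) + 1 ≤ v p n ∧ (¬(p = 1 / 2 ∧ n = 3) → v p (n - 1) + 1 < v p n) := by
  obtain ⟨Ha, Hb, _, _⟩ := master hp1 hp2 n (by omega)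
  refine ⟨Ha n hn le_rfl, ?_⟩
  intro hne
  have hcond : p ≠ 1/2 ∨ 4 ≤ n := by
    by_cases hp : p = 1/2
    · right
      have : n ≠ 3 := fun h => hne ⟨hp, h⟩
      omega
    · exact Or.inl hp
  exact Hb n hn le_rfl hcond
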